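/- Let H be a 5×5 complex Hadamard matrix in dephased form, let ω = e^{2πi/5}, and suppose e is a function from pairs of indices to ℤ/5ℤ such that √5·H[j,k] = ω^{e(j,k)} for all indices j, k. Suppose j and j' are distinct indices in {1,2,3,4} and there exists a permutation τ of {1,2,3,4} with τ∘τ = id such that H[j,l] = H[j',τ(l)] for all l ∈ {1,2,3,4} (i.e., rows j and j' pair up). Then e(j,k) + e(j',k) = 0 in ℤ/5ℤ for every k ∈ {1,2,3,4}. -/

import Mathlib

open Matrix Polynomial Complex

/-- A 5×5 complex Hadamard matrix: unitary with all entries of absolute value `1/√5`. -/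
def IsHadamard (H : Matrix (Fin 5) (Fin 5) ℂ) : Prop :=
  H * Hᴴ = 1 ∧ Hᴴ * H = 1 ∧ ∀ i j, ‖H i j‖ = 1 / Real.sqrt 5

/-- Dephased form: all entries of the 0th row and 0th column equal `1/√5`. -/
def IsDephased (H : Matrix (Fin 5) (Fin 5) ℂ) : Prop :=
  (∀ j, H 0 j = ((1 / Real.sqrt 5 : ℝ) : ℂ)) ∧ (∀ i, H i 0 = ((1 / Real.sqrt 5 : ℝ) : ℂ))

noncomputable section
namespace PairupAux

def ω : ℂ := Complex.exp (2 * Real.pi * Complex.I / 5)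

lemma hprim : IsPrimitiveRoot ω 5 := by
  have h := Complex.isPrimitiveRoot_exp 5 (by norm_num)
  simpa [ω] using h

def ζ (c : ZMod 5) : ℂ := ω ^ c.val

lemma inj_of_sum (a : Fin 5 → ZMod 5) (h : ∑ l, ζ (a l) = 0) :
    Function.Injective a := by
  classical
  haveI : Fact (Nat.Prime 5) := ⟨by norm_num⟩
  set n : ZMod 5 → ℕ := fun c => (Finset.univ.filter fun l => a l = c).card with hn
  have hsum : ∑ c : ZMod 5, (n c : ℂ) * ζ c = 0 := by
    rw [← h, ← Finset.sum_fiberwise Finset.univ a (fun l => ζ (a l))]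
    refine Finset.sum_congr rfl fun c _ => ?_
    rw [Finset.sum_congr rfl (fun l hl => by rw [(Finset.mem_filter.mp hl).2]),
        Finset.sum_const, nsmul_eq_mul]
  have htot : ∑ c : ZMod 5, n c = 5 := by
    have := Finset.card_eq_sum_card_fiberwise
      (f := a) (s := (Finset.univ : Finset (Fin 5))) (t := (Finset.univ : Finset (ZMod 5)))
      (fun x _ => Finset.mem_univ _)
    simpa [hn] using this.symm
  set q : ℚ[X] := ∑ c : ZMod 5, C (n c : ℚ) * X ^ c.val with hq
  have hΦ : cyclotomic 5 ℚ = minpoly ℚ ω := cyclotomic_eq_minpoly_rat hprim (by norm_num)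
  have hΦsum : cyclotomic 5 ℚ = ∑ i ∈ Finset.range 5, X ^ i := cyclotomic_prime ℚ 5
  have hΦcoeff : ∀ d : ℕ, d < 5 → (cyclotomic 5 ℚ).coeff d = 1 := by
    intro d hd
    rw [hΦsum, finset_sum_coeff]
    rw [Finset.sum_eq_single d (fun i _ hi => by rw [coeff_X_pow, if_neg (Ne.symm hi)])
      (fun hd' => absurd (Finset.mem_range.mpr hd) hd')]
    rw [coeff_X_pow, if_pos rfl]
  have hΦcoeff' : ∀ d : ℕ, 5 ≤ d → (cyclotomic 5 ℚ).coeff d = 0 := by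
    intro d hd
    rw [hΦsum, finset_sum_coeff]
    refine Finset.sum_eq_zero fun i hi => ?_
    have : i < 5 := Finset.mem_range.mp hi
    rw [coeff_X_pow, if_neg (by omega)]
  have hqcoeff : ∀ d : ℕ, d < 5 → q.coeff d = (n ((d : ℕ) : ZMod 5) : ℚ) := by
    intro d hd
    rw [hq, finset_sum_coeff]
    rw [Finset.sum_eq_single ((d : ℕ) : ZMod 5) ?h1 (fun hmem => absurd (Finset.mem_univ _) hmem)]
    · rw [coeff_C_mul, coeff_X_pow, if_pos (ZMod.val_cast_of_lt hd).symm, mul_one]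
    case h1 =>
      intro c _ hc
      have hcv : c.val ≠ d := by
        intro hcd
        exact hc (by rw [← hcd, ZMod.natCast_rightInverse c])
      rw [coeff_C_mul, coeff_X_pow, if_neg (fun h => hcv h.symm), mul_zero]
  have hqcoeff' : ∀ d : ℕ, 5 ≤ d → q.coeff d = 0 := by
    intro d hd
    rw [hq, finset_sum_coeff]
    refine Finset.sum_eq_zero fun c _ => ?_
    have hcv : c.val < 5 := ZMod.val_lt c
    rw [coeff_C_mul, coeff_X_pow, if_neg (by omega), mul_zero]
  have hqω : aeval ω q = 0 := by
    rw [hq, map_sum]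
    have : ∀ c : ZMod 5, aeval ω (C ((n c : ℚ)) * X ^ c.val) = (n c : ℂ) * ζ c := by
      intro c
      simp [ζ, aeval_C, _root_.map_mul, map_pow]
    rw [Finset.sum_congr rfl fun c _ => this c]
    exact hsum
  set r : ℚ[X] := q - C ((n ((4:ℕ) : ZMod 5) : ℚ)) * cyclotomic 5 ℚ with hr
  have hrω : aeval ω r = 0 := by
    rw [hr, map_sub, hqω, _root_.map_mul, hΦ, minpoly.aeval, mul_zero, sub_zero]
  have hrcoeff : ∀ d : ℕ, r.coeff d = q.coeff d - (n ((4:ℕ) : ZMod 5) : ℚ) * (cyclotomic 5 ℚ).coeff d := by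
    intro d; rw [hr, coeff_sub, coeff_C_mul]
  have hr0 : r = 0 := by
    by_contra hrne
    have hdvd : minpoly ℚ ω ∣ r := minpoly.dvd ℚ ω hrω
    have h4 : (minpoly ℚ ω).natDegree = 4 := by
      rw [← hΦ, natDegree_cyclotomic]; decide
    have hle : r.natDegree ≤ 3 := by
      rw [natDegree_le_iff_coeff_eq_zero]
      intro m hm
      rcases Nat.lt_or_ge m 5 with h5 | h5
      · have hm4 : m = 4 := by omega
        rw [hrcoeff, hm4, hqcoeff 4 (by norm_num), hΦcoeff 4 (by norm_num), mul_one, sub_self]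
      · rw [hrcoeff, hqcoeff' m h5, hΦcoeff' m h5, mul_zero, sub_self]
    have := natDegree_le_of_dvd hdvd hrne
    omega
  have hnconst : ∀ c : ZMod 5, n c = n ((4:ℕ) : ZMod 5) := by
    intro c
    have hcv : c = ((c.val : ℕ) : ZMod 5) := (ZMod.natCast_rightInverse c).symm
    have hcoeq : r.coeff c.val = 0 := by rw [hr0, coeff_zero]
    rw [hrcoeff, hqcoeff c.val (ZMod.val_lt c), hΦcoeff c.val (ZMod.val_lt c), mul_one,
      sub_eq_zero] at hcoeq
    rw [hcv]
    exact_mod_cast hcoeq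
  have hn4 : n ((4:ℕ) : ZMod 5) = 1 := by
    have : ∑ c : ZMod 5, n c = 5 * n ((4:ℕ) : ZMod 5) := by
      rw [Finset.sum_congr rfl fun c _ => hnconst c, Finset.sum_const, Finset.card_univ]
      simp [ZMod.card]
    omega
  have hone : ∀ c : ZMod 5, (Finset.univ.filter fun l => a l = c).card = 1 := by
    intro c
    have := hnconst c
    rw [hn4] at this
    simpa [hn] using this
  intro p p' hpp'
  have h1 := hone (a p)
  have hp : p ∈ Finset.univ.filter fun l => a l = a p := by simp
  have hp' : p' ∈ Finset.univ.filter fun l => a l = a p := by simp [hpp']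
  exact Finset.card_le_one.mp (le_of_eq h1) p hp p' hp'



lemma hω5 : ω ^ 5 = 1 := hprim.pow_eq_one

lemma ωmod (m : ℕ) : ω ^ (m % 5) = ω ^ m := by
  conv_rhs => rw [← Nat.div_add_mod m 5]
  rw [pow_add, pow_mul, hω5, one_pow, one_mul]

lemma zmod5_key : ∀ x y z w : ZMod 5,
    x ≠ 0 → y ≠ 0 → z ≠ 0 → w ≠ 0 →
    x ≠ y → x ≠ z → x ≠ w → y ≠ z → y ≠ w → z ≠ w →
    x - y ≠ z - w → x - y ≠ w - z → x + y = 0 := by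
  have key : ∀ x y z w : ZMod 5,
    (x ≠ 0 ∧ y ≠ 0 ∧ z ≠ 0 ∧ w ≠ 0 ∧
    x ≠ y ∧ x ≠ z ∧ x ≠ w ∧ y ≠ z ∧ y ≠ w ∧ z ≠ w ∧
    x - y ≠ z - w ∧ x - y ≠ w - z) → x + y = 0 := by decide
  intro x y z w h1 h2 h3 h4 h5 h6 h7 h8 h9 h10 h11 h12
  exact key x y z w ⟨h1,h2,h3,h4,h5,h6,h7,h8,h9,h10,h11,h12⟩

lemma exists_c : ∀ x y z : Fin 5, ∃ c : Fin 5, c ≠ x ∧ c ≠ y ∧ c ≠ z := by decide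

lemma ζ_zero : ζ 0 = 1 := by simp [ζ, ZMod.val_zero]

lemma ζ_add (a b : ZMod 5) : ζ (a + b) = ζ a * ζ b := by
  unfold ζ
  rw [ZMod.val_add, ωmod, pow_add]

lemma ζ_inj : Function.Injective ζ := by
  intro a b hab
  have h := hprim.pow_inj (ZMod.val_lt a) (ZMod.val_lt b) hab
  exact ZMod.val_injective 5 h

lemma ζ_star (c : ZMod 5) : star (ζ c) = ζ (-c) := by
  have h1 : ζ c * ζ (-c) = 1 := by rw [← ζ_add]; simp [ζ_zero]
  have hA : (starRingEnd ℂ) (2 * Real.pi * Complex.I / 5) = -(2 * Real.pi * Complex.I / 5) := by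
    simp [map_div₀, _root_.map_mul, Complex.conj_I, Complex.conj_ofReal, Complex.conj_ofNat]
    ring
  have hsω : star ω = ω⁻¹ := by
    show (starRingEnd ℂ) ω = ω⁻¹
    rw [ω, ← Complex.exp_conj, hA, Complex.exp_neg]
  have h2 : (ζ c)⁻¹ = ζ (-c) := inv_eq_of_mul_eq_one_right h1
  rw [← h2, ζ, star_pow, hsω, inv_pow]

end PairupAux

end

open PairupAux in
theorem pairup_exponents_sum_zero
    (H : Matrix (Fin 5) (Fin 5) ℂ)
    (hH : _root_.IsHadamard H) (hd : IsDephased H)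
    (e : Fin 5 → Fin 5 → ZMod 5)
    (he : ∀ j k, (Real.sqrt 5 : ℂ) * H j k =
      Complex.exp (2 * Real.pi * Complex.I / 5) ^ (e j k).val)
    (j j' : Fin 5) (hjj' : j ≠ j') (hj : j ≠ 0) (hj' : j' ≠ 0)
    (τ : Equiv.Perm (Fin 5)) (hτ0 : τ 0 = 0) (hτ2 : ∀ l, τ (τ l) = l)
    (hpair : ∀ l, l ≠ 0 → H j l = H j' (τ l)) :
    ∀ k : Fin 5, k ≠ 0 → e j k + e j' k = 0 := by
  classical
  intro k hk
  obtain ⟨hHH, -, -⟩ := hH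
  obtain ⟨hd0, hd1⟩ := hd
  have hs5 : (Real.sqrt 5 : ℂ) ≠ 0 := by
    have h5 : (0:ℝ) < Real.sqrt 5 := Real.sqrt_pos.mpr (by norm_num)
    exact_mod_cast h5.ne'
  have heζ : ∀ p l, (Real.sqrt 5 : ℂ) * H p l = ζ (e p l) := by
    intro p l; rw [ζ, ω]; exact he p l
  have he0 : ∀ p, e p 0 = 0 := by
    intro p
    apply ζ_inj
    rw [← heζ p 0, hd1 p, ζ_zero, Complex.ofReal_div, Complex.ofReal_one]
    field_simp
  have hτne : ∀ l : Fin 5, l ≠ 0 → τ l ≠ 0 := by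
    intro l hl h0
    exact hl (by rw [← hτ2 l, h0, hτ0])
  have hτinj : ∀ l m : Fin 5, τ l = τ m → l = m := by
    intro l m h
    rw [← hτ2 l, h, hτ2]
  have he' : ∀ l, e j' l = e j (τ l) := by
    intro l
    by_cases hl : l = 0
    · rw [hl, hτ0, he0, he0]
    · apply ζ_inj
      rw [← heζ, ← heζ, hpair (τ l) (hτne l hl), hτ2]
  have hrow : ∀ p q : Fin 5, p ≠ q → ∑ l, H p l * star (H q l) = 0 := by
    intro p q hpq
    have h1 := congrFun (congrFun hHH p) q
    rw [Matrix.mul_apply, Matrix.one_apply_ne hpq] at h1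
    simpa [Matrix.conjTranspose_apply] using h1
  have hsumj : ∑ l, ζ (e j l) = 0 := by
    have h1 := hrow j 0 hj
    have h3 : ∑ l, H j l * star (H 0 l) = (∑ l, H j l) * ((1 / Real.sqrt 5 : ℝ) : ℂ) := by
      rw [Finset.sum_mul]
      refine Finset.sum_congr rfl fun l _ => ?_
      rw [hd0 l, Complex.star_def, Complex.conj_ofReal]
    rw [h3] at h1
    have hc : ((1 / Real.sqrt 5 : ℝ) : ℂ) ≠ 0 := by
      rw [Complex.ofReal_div, Complex.ofReal_one]
      exact div_ne_zero one_ne_zero hs5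
    have h2 : ∑ l, H j l = 0 := by
      rcases mul_eq_zero.mp h1 with h | h
      · exact h
      · exact absurd h hc
    calc ∑ l, ζ (e j l) = ∑ l, (Real.sqrt 5 : ℂ) * H j l :=
          Finset.sum_congr rfl fun l _ => (heζ j l).symm
      _ = (Real.sqrt 5 : ℂ) * ∑ l, H j l := by rw [Finset.mul_sum]
      _ = 0 := by rw [h2, mul_zero]
  have hinjf := inj_of_sum _ hsumj
  have hsumd : ∑ l, ζ (e j l - e j' l) = 0 := by
    have h1 := hrow j j' hjj'
    have h2 : ∀ l, ζ (e j l - e j' l)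
        = ((Real.sqrt 5 : ℂ) * (Real.sqrt 5 : ℂ)) * (H j l * star (H j' l)) := by
      intro l
      have hst : star ((Real.sqrt 5 : ℂ) * H j' l) = (Real.sqrt 5 : ℂ) * star (H j' l) := by
        rw [star_mul', Complex.star_def, Complex.conj_ofReal]
      calc ζ (e j l - e j' l)
          = ζ (e j l) * ζ (-(e j' l)) := by
            rw [sub_eq_add_neg, ζ_add]
        _ = ((Real.sqrt 5:ℂ) * H j l) * star ((Real.sqrt 5:ℂ) * H j' l) := by
            rw [heζ, ← ζ_star, heζ]
        _ = _ := by rw [hst]; ring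
    rw [Finset.sum_congr rfl fun l _ => h2 l, ← Finset.mul_sum, h1, mul_zero]
  have hinjd := inj_of_sum (fun l => e j l - e j' l) hsumd
  have hfpf : ∀ l : Fin 5, l ≠ 0 → τ l ≠ l := by
    intro l hl hτl
    apply hl
    apply hinjd
    show e j l - e j' l = e j 0 - e j' 0
    rw [he' l, hτl, sub_self, he0, he0, sub_zero]
  obtain ⟨c, hc0, hck, hcτk⟩ := exists_c 0 k (τ k)
  have hkτk : k ≠ τ k := fun h => hfpf k hk h.symm
  have hτc0 : τ c ≠ 0 := hτne c hc0
  have hτcc : τ c ≠ c := hfpf c hc0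
  have hτck : τ c ≠ k := fun h => hcτk (by rw [← h, hτ2])
  have hτcτk : τ c ≠ τ k := fun h => hck (hτinj _ _ h)
  have hnz : ∀ m : Fin 5, m ≠ 0 → e j m ≠ 0 := by
    intro m hm h0
    exact hm (hinjf (by rw [h0, he0]))
  have hdiff : ∀ l m : Fin 5, l ≠ m → e j l - e j' l ≠ e j m - e j' m := by
    intro l m hlm h
    exact hlm (hinjd h)
  have hne1 : e j k - e j (τ k) ≠ e j c - e j (τ c) := by
    rw [← he' k, ← he' c]
    exact hdiff k c (fun h => hck h.symm)
  have hne2 : e j k - e j (τ k) ≠ e j (τ c) - e j c := by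
    have hwz : e j (τ c) - e j c = e j (τ c) - e j' (τ c) := by
      rw [he' (τ c), hτ2]
    rw [← he' k, hwz]
    exact hdiff k (τ c) (fun h => hτck h.symm)
  have hval := zmod5_key (e j k) (e j (τ k)) (e j c) (e j (τ c))
    (hnz k hk) (hnz (τ k) (hτne k hk)) (hnz c hc0) (hnz (τ c) hτc0)
    (fun h => hkτk (hinjf h))
    (fun h => hck (hinjf h).symm)
    (fun h => hτck (hinjf h).symm)
    (fun h => hcτk (hinjf h).symm)
    (fun h => hτcτk (hinjf h).symm)
    (fun h => hτcc (hinjf h).symm)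
    hne1 hne2
  rw [he' k]
  exact hval
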